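/- arXiv:1710.00979 — 3 statements merged into one kernel-verified Lean document; each statement's English description precedes it below -/
import Mathlib

section
/- Fix n ≥ 2, let S_1, …, S_r be all the irreducible numerical semigroups with Frobenius number n, and set F_i = S_i ∩ {1,…,n−1}. Suppose the indexing is such that Σ_{s ∈ F_i} s ≥ Σ_{s ∈ F_j} s whenever i < j. Then F_1, …, F_r is a shelling order: for all 1 ≤ j < i ≤ r there exists k < i such that F_j ∩ F_i ⊆ F_k ∩ F_i and #(F_k ∩ F_i) = #F_i − 1. -/
open Filter Topology
open scoped Classical BigOperators

/-- The set of gaps of a numerical semigroup `S ⊆ ℕ`. -/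
def gapSet (S : AddSubmonoid ℕ) : Set ℕ := {n : ℕ | n ∉ S}

/-- `S` is cofinite if its set of gaps is finite. -/
def IsCofinite (S : AddSubmonoid ℕ) : Prop := (gapSet S).Finite

/-- The minimal generators of `S`: nonzero elements of `S` that are not the
sum of two nonzero elements of `S`. -/
def minGens (S : AddSubmonoid ℕ) : Set ℕ :=
  {s : ℕ | s ∈ S ∧ s ≠ 0 ∧ ¬ ∃ a ∈ S, ∃ b ∈ S, a ≠ 0 ∧ b ≠ 0 ∧ s = a + b}

/-- The embedding dimension `e(S)`: the number of minimal generators of `S`. -/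
noncomputable def embDim (S : AddSubmonoid ℕ) : ℕ := (minGens S).ncard

/-- The genus `g(S)`: the number of gaps of `S` (junk value `0` if `S` is not cofinite). -/
noncomputable def genus (S : AddSubmonoid ℕ) : ℕ := (gapSet S).ncard

/-- The Frobenius number `F(S)`: the largest gap of `S`
(junk value `0` if `S` is not cofinite or `S = ℕ`). -/
noncomputable def frob (S : AddSubmonoid ℕ) : ℕ := sSup (gapSet S)

/-- A cofinite numerical semigroup `S ≠ ℕ` is irreducible if it is maximal with
respect to inclusion among numerical semigroups with Frobenius number `F(S)`. -/
def IsIrred (S : AddSubmonoid ℕ) : Prop :=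
  IsCofinite S ∧ S ≠ ⊤ ∧
    ∀ T : AddSubmonoid ℕ, S ≤ T → frob T = frob S → T = S

/-- The number of gaps of `S` that are at most `M`. -/
noncomputable def gapsUpTo (S : AddSubmonoid ℕ) (M : ℕ) : ℕ :=
  {x : ℕ | x ∉ S ∧ x ≤ M}.ncard

/-- The probability weight of a generating set `B ⊆ {1, …, M}` in the ER-type
model `S(M, p)`. -/
noncomputable def wt (p : ℝ) (M : ℕ) (B : Finset ℕ) : ℝ :=
  p ^ B.card * (1 - p) ^ (M - B.card)

/-- The probability in the ER-type model `S(M, p)` that the random numerical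
semigroup `𝒮 = ⟨𝒜⟩` lies in the event `E`. -/
noncomputable def probEvent (M : ℕ) (p : ℝ) (E : Set (AddSubmonoid ℕ)) : ℝ :=
  ∑ B ∈ (Finset.Icc 1 M).powerset,
    if AddSubmonoid.closure (B : Set ℕ) ∈ E then wt p M B else 0

/-- The expectation in the ER-type model `S(M, p)` of an invariant `X` of the
random numerical semigroup `𝒮 = ⟨𝒜⟩`. -/
noncomputable def expectVal (M : ℕ) (p : ℝ) (X : AddSubmonoid ℕ → ℕ) : ℝ :=
  ∑ B ∈ (Finset.Icc 1 M).powerset,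
    (X (AddSubmonoid.closure (B : Set ℕ)) : ℝ) * wt p M B

/-- `h_{n,i}`: the number of numerical semigroups `T` with `n ∉ T`, embedding
dimension `i`, and all minimal generators strictly less than `n/2`. -/
noncomputable def hvec (n i : ℕ) : ℕ :=
  {T : AddSubmonoid ℕ | n ∉ T ∧ embDim T = i ∧ ∀ a ∈ minGens T, 2 * a < n}.ncard

/-- `a_n(p)`: the probability that `n` is not in the semigroup generated by a
random subset of `{1, …, n-1}` chosen with inclusion probability `p`. -/
noncomputable def anp (n : ℕ) (p : ℝ) : ℝ :=
  ∑ A ∈ (Finset.Icc 1 (n - 1)).powerset,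
    if n ∉ AddSubmonoid.closure (A : Set ℕ) then
      p ^ A.card * (1 - p) ^ (n - 1 - A.card) else 0

lemma gapSet_antitone {S T : AddSubmonoid ℕ} (h : S ≤ T) : gapSet T ⊆ gapSet S :=
  fun x hx hxS => hx (h hxS)

lemma gapSet_nonempty {S : AddSubmonoid ℕ} (hS : S ≠ ⊤) : (gapSet S).Nonempty := by
  by_contra h
  rw [Set.not_nonempty_iff_eq_empty] at h
  apply hS
  ext x
  simp only [AddSubmonoid.mem_top, iff_true]
  by_contra hx
  have : x ∈ gapSet S := hx
  simp [h] at this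

lemma frob_not_mem {S : AddSubmonoid ℕ} (hc : IsCofinite S) (hS : S ≠ ⊤) : frob S ∉ S :=
  (gapSet_nonempty hS).csSup_mem hc

lemma maxAvoid {S : AddSubmonoid ℕ} (h : IsIrred S) {T : AddSubmonoid ℕ}
    (hST : S ≤ T) (hT : frob S ∉ T) : T = S := by
  apply h.2.2 T hST
  have hsub : gapSet T ⊆ gapSet S := gapSet_antitone hST
  have hfin : (gapSet T).Finite := h.1.subset hsub
  have hmem : frob S ∈ gapSet T := hT
  apply le_antisymm
  · exact csSup_le_csSup h.1.bddAbove ⟨_, hmem⟩ hsub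
  · exact le_csSup hfin.bddAbove hmem

lemma ext_mem {S : AddSubmonoid ℕ} {n : ℕ}
    (hmax : ∀ T : AddSubmonoid ℕ, S ≤ T → n ∉ T → T = S) (z : ℕ)
    (h : ∀ s ∈ S, ∀ k : ℕ, s + k * z ≠ n) : z ∈ S := by
  have hT : (S ⊔ AddSubmonoid.closure {z}) = S := by
    apply hmax _ le_sup_left
    intro hnmem
    rw [AddSubmonoid.mem_sup] at hnmem
    obtain ⟨s, hs, t, ht, hst⟩ := hnmem
    rw [AddSubmonoid.mem_closure_singleton] at ht
    obtain ⟨k, hk⟩ := ht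
    exact h s hs k (by rw [← hk] at hst; simpa [smul_eq_mul] using hst)
  rw [← hT]
  exact SetLike.le_def.mp le_sup_right (AddSubmonoid.mem_closure_singleton.2 ⟨1, by simp⟩)

lemma gt_mem {S : AddSubmonoid ℕ} {n : ℕ}
    (hmax : ∀ T : AddSubmonoid ℕ, S ≤ T → n ∉ T → T = S) (hnS : n ∉ S)
    {m : ℕ} (hm : n < m) : m ∈ S := by
  apply ext_mem hmax
  intro s hs k hsk
  rcases Nat.eq_zero_or_pos k with rfl | hk
  · simp at hsk; exact hnS (hsk ▸ hs)
  · nlinarith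

lemma sym2 {S : AddSubmonoid ℕ} {n : ℕ}
    (hmax : ∀ T : AddSubmonoid ℕ, S ≤ T → n ∉ T → T = S) (hnS : n ∉ S)
    {y : ℕ} (hy : y < n) (h2y : 2 * y ≠ n) (hyS : y ∉ S) : n - y ∈ S := by
  by_contra hny
  -- let z be the one of {y, n-y} with 2z > n
  have key : ∀ z : ℕ, z < n → 2 * z > n → z ∉ S → (n - z) ∉ S → False := by
    intro z hz h2z hzS hnzS
    apply hzS
    apply ext_mem hmax
    intro s hs k hsk
    match k with
    | 0 => simp at hsk; exact hnS (hsk ▸ hs)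
    | 1 => apply hnzS; have : s = n - z := by omega
           exact this ▸ hs
    | (m+2) => nlinarith
  have hy0 : y ≠ 0 := fun h0 => hyS (h0 ▸ S.zero_mem)
  rcases lt_or_gt_of_ne h2y with h | h
  · exact key (n - y) (by omega) (by omega) hny (by rw [show n - (n-y) = y by omega]; exact hyS)
  · exact key y hy h hyS hny

lemma sym1 {S : AddSubmonoid ℕ} {n : ℕ} (hnS : n ∉ S)
    {y : ℕ} (hy : y ≤ n) (h1 : y ∈ S) (h2 : n - y ∈ S) : False := by
  apply hnS
  have := S.add_mem h1 h2
  rwa [show y + (n - y) = n by omega] at this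

def mkSgp (n : ℕ) (G : Finset ℕ)
    (h : ∀ a b : ℕ, a ∈ G → b ∈ G → a + b ∈ G ∨ n < a + b) : AddSubmonoid ℕ where
  carrier := {m | m = 0 ∨ m ∈ G ∨ n < m}
  zero_mem' := Or.inl rfl
  add_mem' := by
    rintro a b (rfl | ha | ha) (rfl | hb | hb)
    · exact Or.inl rfl
    · exact Or.inr (Or.inl (by simpa using hb))
    · exact Or.inr (Or.inr (by simpa using hb))
    · exact Or.inr (Or.inl (by simpa using ha))
    · rcases h a b ha hb with h' | h'
      · exact Or.inr (Or.inl h')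
      · exact Or.inr (Or.inr h')
    · exact Or.inr (Or.inr (by omega))
    · exact Or.inr (Or.inr (by omega))
    · exact Or.inr (Or.inr (by omega))
    · exact Or.inr (Or.inr (by omega))

lemma mem_mkSgp {n : ℕ} {G : Finset ℕ} {h} {m : ℕ} :
    m ∈ mkSgp n G h ↔ (m = 0 ∨ m ∈ G ∨ n < m) := Iff.rfl

lemma mkSgp_irred {n : ℕ} (hn : 2 ≤ n) {G : Finset ℕ}
    {h : ∀ a b : ℕ, a ∈ G → b ∈ G → a + b ∈ G ∨ n < a + b}
    (hG : ∀ y ∈ G, 1 ≤ y ∧ y ≤ n - 1)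
    (hpair : ∀ y : ℕ, 1 ≤ y → y ≤ n - 1 → 2 * y ≠ n → (y ∈ G ↔ n - y ∉ G)) :
    IsIrred (mkSgp n G h) ∧ frob (mkSgp n G h) = n := by
  set T := mkSgp n G h with hT
  have hnT : n ∉ T := by
    rw [mem_mkSgp]
    push_neg
    refine ⟨by omega, fun hnG => ?_, le_refl n⟩
    · have := hG n hnG; omega
  have hgap : gapSet T ⊆ Set.Iic n := by
    intro m hm
    rcases Nat.lt_or_ge n m with h' | h'
    · exact absurd (Or.inr (Or.inr h') : m = 0 ∨ m ∈ G ∨ n < m) hm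
    · exact h'
  have hfin : IsCofinite T := (Set.finite_Iic n).subset hgap
  have hne : T ≠ ⊤ := fun ht => hnT (ht ▸ AddSubmonoid.mem_top n)
  have hfr : frob T = n := by
    apply le_antisymm
    · exact csSup_le ⟨n, hnT⟩ (fun m hm => hgap hm)
    · exact le_csSup (hfin.bddAbove) hnT
  refine ⟨⟨hfin, hne, ?_⟩, hfr⟩
  intro T' hTT' hfr'
  rw [hfr] at hfr'
  -- first: n ∉ T'
  have hfin' : IsCofinite T' := hfin.subset (gapSet_antitone hTT')
  have hne' : T' ≠ ⊤ := by
    intro ht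
    have : gapSet T' = ∅ := by
      ext m; simp [gapSet, ht]
    rw [frob, this] at hfr'
    simp [csSup_empty] at hfr'
    omega
  have hnT' : n ∉ T' := hfr' ▸ frob_not_mem hfin' hne'
  -- now show T' = T
  ext m
  refine ⟨fun hm => ?_, fun hm => hTT' hm⟩
  by_contra hmT
  rw [mem_mkSgp] at hmT
  push_neg at hmT
  obtain ⟨hm0, hmG, hmn⟩ := hmT
  have hmn' : m ≠ n := fun e => hnT' (e ▸ hm)
  rcases eq_or_ne (2 * m) n with h2m | h2m
  · apply hnT'
    have := T'.add_mem hm hm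
    rwa [show m + m = n by omega] at this
  · have : n - m ∈ G := by
      by_contra hc
      exact hmG (((hpair m (by omega) (by omega) h2m)).2 hc)
    have hnm : n - m ∈ T' := hTT' (Or.inr (Or.inl this))
    apply hnT'
    have := T'.add_mem hm hnm
    rwa [show m + (n - m) = n by omega] at this

theorem statement5 (n : ℕ) (hn : 2 ≤ n) (r : ℕ) (S : Fin r → AddSubmonoid ℕ)
    (hirr : ∀ i, IsIrred (S i) ∧ frob (S i) = n)
    (hinj : Function.Injective S)
    (hall : ∀ T : AddSubmonoid ℕ, IsIrred T → frob T = n → ∃ i, S i = T)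
    (F : Fin r → Finset ℕ)
    (hF : ∀ i, F i = (Finset.Icc 1 (n - 1)).filter (fun x => x ∈ S i))
    (hord : ∀ i j : Fin r, i < j → ∑ s ∈ F j, s ≤ ∑ s ∈ F i, s) :
    ∀ i j : Fin r, j < i →
      ∃ k : Fin r, k < i ∧ F j ∩ F i ⊆ F k ∩ F i ∧
        (F k ∩ F i).card = (F i).card - 1 := by
  -- basic per-index facts
  have hnS : ∀ l, n ∉ S l := fun l =>
    (hirr l).2 ▸ frob_not_mem (hirr l).1.1 (hirr l).1.2.1
  have hmax : ∀ l, ∀ T : AddSubmonoid ℕ, S l ≤ T → n ∉ T → T = S l := by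
    intro l T hle hnT
    exact maxAvoid (hirr l).1 hle ((hirr l).2 ▸ hnT)
  have memF : ∀ l m, m ∈ F l ↔ (1 ≤ m ∧ m ≤ n - 1 ∧ m ∈ S l) := by
    intro l m
    rw [hF l]
    simp [Finset.mem_filter, Finset.mem_Icc, and_assoc]
  have charS : ∀ l m, m ∈ S l ↔ (m = 0 ∨ m ∈ F l ∨ n < m) := by
    intro l m
    constructor
    · intro hm
      rcases Nat.eq_zero_or_pos m with rfl | hm1
      · exact Or.inl rfl
      rcases Nat.lt_or_ge n m with h' | h'
      · exact Or.inr (Or.inr h')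
      have : m ≠ n := fun e => hnS l (e ▸ hm)
      exact Or.inr (Or.inl ((memF l m).2 ⟨hm1, by omega, hm⟩))
    · rintro (rfl | hm | hm)
      · exact (S l).zero_mem
      · exact ((memF l m).1 hm).2.2
      · exact gt_mem (hmax l) (hnS l) hm
  have hnohalf : ∀ l y, y ∈ F l → 2 * y ≠ n := by
    intro l y hy h2
    have hy' := (memF l y).1 hy
    exact sym1 (hnS l) (show y ≤ n by omega) hy'.2.2
      (by rw [show n - y = y by omega]; exact hy'.2.2)
  have pairF : ∀ l y, 1 ≤ y → y ≤ n - 1 → 2 * y ≠ n → (y ∈ F l ↔ n - y ∉ F l) := by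
    intro l y h1 h2 h3
    constructor
    · intro hy hny
      exact sym1 (hnS l) (by omega) ((memF l y).1 hy).2.2 ((memF l (n - y)).1 hny).2.2
    · intro hny
      by_contra hy
      apply hny
      refine (memF l (n - y)).2 ⟨by omega, by omega, ?_⟩
      apply sym2 (hmax l) (hnS l) (by omega) h3
      intro hyS
      exact hy ((memF l y).2 ⟨h1, h2, hyS⟩)
  have closedF : ∀ l a b, a ∈ F l → b ∈ F l → a + b ≤ n - 1 → a + b ∈ F l := by
    intro l a b ha hb hab
    have ha' := (memF l a).1 ha
    have hb' := (memF l b).1 hb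
    exact (memF l (a + b)).2 ⟨by omega, hab, (S l).add_mem ha'.2.2 hb'.2.2⟩
  intro i j hji
  -- F i ≠ F j
  have hFne : F i ≠ F j := by
    intro he
    apply absurd (hinj (show S i = S j from ?_)) (by intro e; rw [e] at hji; exact lt_irrefl _ hji)
    ext m
    rw [charS i m, charS j m, he]
  -- the reflection image equality
  have himg : ∀ (a b : Fin r), (F a \ F b).image (fun y => n - y) = F b \ F a := by
    intro a b
    ext z
    simp only [Finset.mem_image, Finset.mem_sdiff]
    constructor
    · rintro ⟨y, ⟨hya, hyb⟩, rfl⟩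
      have hy' := (memF a y).1 hya
      have h2y := hnohalf a y hya
      refine ⟨?_, (pairF a y hy'.1 hy'.2.1 h2y).1 hya⟩
      by_contra hc
      exact hyb ((pairF b y hy'.1 hy'.2.1 h2y).2 hc)
    · rintro ⟨hzb, hza⟩
      have hz' := (memF b z).1 hzb
      have h2z := hnohalf b z hzb
      refine ⟨n - z, ⟨?_, ?_⟩, by omega⟩
      · by_contra hc
        exact hza ((pairF a z hz'.1 hz'.2.1 h2z).2 hc)
      · intro hc
        have := (pairF b (n - z) (by omega) (by omega) (by omega)).1 hc
        rw [show n - (n - z) = z by omega] at this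
        exact this hzb
  -- F i \ F j is nonempty
  have hne : (F i \ F j).Nonempty := by
    rw [Finset.nonempty_iff_ne_empty]
    intro he
    have h1 : F j \ F i = ∅ := by rw [← himg i j, he]; simp
    apply hFne
    have := Finset.sdiff_eq_empty_iff_subset.1 he
    have := Finset.sdiff_eq_empty_iff_subset.1 h1
    exact Finset.Subset.antisymm ‹F i ⊆ F j› ‹F j ⊆ F i›
  -- there exists an element of F i \ F j below n/2
  have hex : ∃ y ∈ F i \ F j, 2 * y < n := by
    by_contra hc
    push_neg at hc
    have hstrict : ∑ z ∈ F j \ F i, z < ∑ y ∈ F i \ F j, y := by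
      rw [← himg i j, Finset.sum_image ?inj]
      case inj =>
        intro a ha b hb hab
        have ha' := (memF i a).1 (Finset.mem_sdiff.1 ha).1
        have hb' := (memF i b).1 (Finset.mem_sdiff.1 hb).1
        have hab' : n - a = n - b := hab
        omega
      apply Finset.sum_lt_sum_of_nonempty hne
      intro y hy
      have h2y := hnohalf i y (Finset.mem_sdiff.1 hy).1
      have := hc y hy
      have hy' := (memF i y).1 (Finset.mem_sdiff.1 hy).1
      omega
    have hsum : ∑ s ∈ F i, s ≤ ∑ s ∈ F j, s := hord j i hji
    have e1 : ∑ z ∈ F i \ (F i ∩ F j), z + ∑ z ∈ F i ∩ F j, z = ∑ z ∈ F i, z :=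
      Finset.sum_sdiff Finset.inter_subset_left
    have e2 : ∑ z ∈ F j \ (F j ∩ F i), z + ∑ z ∈ F j ∩ F i, z = ∑ z ∈ F j, z :=
      Finset.sum_sdiff Finset.inter_subset_left
    rw [Finset.sdiff_inter_self_left] at e1 e2
    rw [Finset.inter_comm] at e2
    omega
  -- the pivot x
  set x := (F i \ F j).min' hne with hxdef
  have hxmem : x ∈ F i \ F j := Finset.min'_mem _ hne
  have hxFi : x ∈ F i := (Finset.mem_sdiff.1 hxmem).1
  have hxFj : x ∉ F j := (Finset.mem_sdiff.1 hxmem).2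
  have hmin : ∀ y, y ∈ F i → y ∉ F j → x ≤ y := by
    intro y h1 h2
    exact Finset.min'_le _ y (Finset.mem_sdiff.2 ⟨h1, h2⟩)
  have h2x : 2 * x < n := by
    obtain ⟨y, hy, h2y⟩ := hex
    have := Finset.min'_le _ y hy
    omega
  have hx' := (memF i x).1 hxFi
  have hnxFj : n - x ∈ F j := by
    by_contra hc
    exact hxFj ((pairF j x hx'.1 hx'.2.1 (by omega)).2 hc)
  have hnxFi : n - x ∉ F i := (pairF i x hx'.1 hx'.2.1 (by omega)).1 hxFi
  -- the new facet G
  set G : Finset ℕ := insert (n - x) ((F i).erase x) with hGdef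
  have memG : ∀ m, m ∈ G ↔ (m = n - x ∨ (m ≠ x ∧ m ∈ F i)) := by
    intro m
    simp [hGdef, Finset.mem_insert, Finset.mem_erase]
  have hGsub : ∀ y ∈ G, 1 ≤ y ∧ y ≤ n - 1 := by
    intro y hy
    rcases (memG y).1 hy with rfl | ⟨_, hy'⟩
    · omega
    · exact ⟨((memF i y).1 hy').1, ((memF i y).1 hy').2.1⟩
  have hpairG : ∀ y : ℕ, 1 ≤ y → y ≤ n - 1 → 2 * y ≠ n → (y ∈ G ↔ n - y ∉ G) := by
    intro y h1 h2 h3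
    rcases eq_or_ne y x with hyx | hyx
    · constructor
      · intro hyG
        rcases (memG y).1 hyG with h | h
        · omega
        · exact absurd hyx h.1
      · intro hc
        exact absurd ((memG (n - y)).2 (Or.inl (by omega))) hc
    rcases eq_or_ne y (n - x) with hynx | hynx
    · constructor
      · intro _ hc
        rcases (memG (n - y)).1 hc with h | h
        · omega
        · exact h.1 (by omega)
      · intro _
        exact (memG y).2 (Or.inl hynx)
    · have e1 : y ∈ G ↔ y ∈ F i := by
        rw [memG]
        constructor
        · rintro (h | h)
          · omega
          · exact h.2
        · exact fun h => Or.inr ⟨hyx, h⟩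
      have e2 : n - y ∈ G ↔ n - y ∈ F i := by
        rw [memG]
        constructor
        · rintro (h | h)
          · omega
          · exact h.2
        · refine fun h => Or.inr ⟨by omega, h⟩
      rw [e1, e2]
      exact pairF i y h1 h2 h3
  have hclosedG : ∀ a b : ℕ, a ∈ G → b ∈ G → a + b ∈ G ∨ n < a + b := by
    intro a b ha hb
    rcases Nat.lt_or_ge n (a + b) with h' | h'
    · exact Or.inr h'
    have ha' := hGsub a ha
    have hb' := hGsub b hb
    have habn : a + b ≠ n := by
      intro he
      have h2a : 2 * a ≠ n := by
        intro h2a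
        rcases (memG a).1 ha with h | h
        · omega
        · exact hnohalf i a h.2 h2a
      have := (hpairG a (by omega) (by omega) h2a).1 ha
      rw [show n - a = b by omega] at this
      exact this hb
    left
    rcases (memG a).1 ha with rfl | ⟨hax, haFi⟩
    · rcases (memG b).1 hb with rfl | ⟨hbx, hbFi⟩
      · omega
      · -- b ∈ F i \ {x}, a = n - x
        have hbx' : b < x := by omega
        have hbFj : b ∈ F j := by
          by_contra hc
          exact absurd (hmin b hbFi hc) (by omega)
        have hcFj : n - x + b ∈ F j := by
          have := closedF j (n - x) b hnxFj hbFj (by omega)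
          rwa [show n - x + b = n - x + b from rfl] at this
        have hcFi : n - x + b ∈ F i := by
          by_contra hc
          have := (pairF i (n - x + b) (by omega) (by omega) (by omega)).2
          -- show n - (n-x+b) = x - b ∈ F i leads to contradiction; use contrapositive
          have hd : n - (n - x + b) ∈ F i := by
            by_contra hd
            exact hc (this hd)
          rw [show n - (n - x + b) = x - b by omega] at hd
          have hdFj : x - b ∉ F j := by
            intro hdj
            exact sym1 (hnS j) (show x - b ≤ n by omega)
              ((memF j (x - b)).1 hdj).2.2
              (by rw [show n - (x - b) = n - x + b by omega]
                  exact ((memF j (n - x + b)).1 hcFj).2.2)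
          have := hmin (x - b) hd hdFj
          omega
        rw [memG]
        exact Or.inr ⟨by omega, hcFi⟩
    · rcases (memG b).1 hb with rfl | ⟨hbx, hbFi⟩
      · -- symmetric: a ∈ F i \ {x}, b = n - x
        have hax' : a < x := by omega
        have haFj : a ∈ F j := by
          by_contra hc
          exact absurd (hmin a haFi hc) (by omega)
        have hcFj : a + (n - x) ∈ F j := closedF j a (n - x) haFj hnxFj (by omega)
        have hcFi : a + (n - x) ∈ F i := by
          by_contra hc
          have hd : n - (a + (n - x)) ∈ F i := by
            by_contra hd
            exact hc ((pairF i (a + (n - x)) (by omega) (by omega) (by omega)).2 hd)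
          rw [show n - (a + (n - x)) = x - a by omega] at hd
          have hdFj : x - a ∉ F j := by
            intro hdj
            exact sym1 (hnS j) (show x - a ≤ n by omega)
              ((memF j (x - a)).1 hdj).2.2
              (by rw [show n - (x - a) = a + (n - x) by omega]
                  exact ((memF j (a + (n - x))).1 hcFj).2.2)
          have := hmin (x - a) hd hdFj
          omega
        rw [memG]
        exact Or.inr ⟨by omega, hcFi⟩
      · -- both in F i \ {x}
        have hcFi : a + b ∈ F i := closedF i a b haFi hbFi (by omega)
        have hcx : a + b ≠ x := by
          intro he
          have haFj : a ∈ F j := by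
            by_contra hc
            exact absurd (hmin a haFi hc) (by omega)
          have hbFj : b ∈ F j := by
            by_contra hc
            exact absurd (hmin b hbFi hc) (by omega)
          exact hxFj (he ▸ closedF j a b haFj hbFj (by omega))
        rw [memG]
        exact Or.inr ⟨hcx, hcFi⟩
  -- build the new semigroup and find its index
  obtain ⟨hTirr, hTfrob⟩ := mkSgp_irred hn hGsub hpairG (h := hclosedG)
  obtain ⟨k, hk⟩ := hall _ hTirr hTfrob
  have hFk : F k = G := by
    ext m
    rw [memF k m, hk, mem_mkSgp]
    constructor
    · rintro ⟨h1, h2, (rfl | h | h)⟩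
      · omega
      · exact h
      · omega
    · intro h
      exact ⟨(hGsub m h).1, (hGsub m h).2, Or.inr (Or.inl h)⟩
  have hinter : F k ∩ F i = (F i).erase x := by
    ext m
    rw [Finset.mem_inter, hFk, memG, Finset.mem_erase]
    constructor
    · rintro ⟨rfl | ⟨h1, h2⟩, hmi⟩
      · exact absurd hmi hnxFi
      · exact ⟨h1, hmi⟩
    · rintro ⟨h1, h2⟩
      exact ⟨Or.inr ⟨h1, h2⟩, h2⟩
  refine ⟨k, ?_, ?_, ?_⟩
  · -- k < i via sums
    have hsumG : ∑ s ∈ F i, s < ∑ s ∈ F k, s := by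
      rw [hFk, hGdef, Finset.sum_insert (fun hc => hnxFi (Finset.erase_subset _ _ hc))]
      have := Finset.add_sum_erase (F i) id hxFi
      simp only [id] at this ⊢
      omega
    rcases lt_trichotomy k i with h | h | h
    · exact h
    · rw [h] at hsumG; omega
    · have := hord i k h; omega
  · intro m hm
    rw [Finset.mem_inter] at hm
    rw [hinter, Finset.mem_erase]
    exact ⟨fun e => hxFj (e ▸ hm.1), hm.2⟩
  · rw [hinter, Finset.card_erase_of_mem hxFi]
end

section
/- Fix n ≥ 2. The number of irreducible numerical semigroups with Frobenius number n that have exactly one minimal generator less than n/2 equals the number of integers a with 0 < a < n/2 that do not divide n. Equivalently, h_{n,1} = #{a ∈ ℤ : 0 < a < n/2 and a ∤ n}. -/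
open Filter Topology
open scoped Classical BigOperators

lemma mem_closure_singleton_iff_dvd {a x : ℕ} :
    x ∈ AddSubmonoid.closure ({a} : Set ℕ) ↔ a ∣ x := by
  rw [AddSubmonoid.mem_closure_singleton]
  constructor
  · rintro ⟨k, rfl⟩; exact ⟨k, by simp [nsmul_eq_mul, mul_comm]⟩
  · rintro ⟨k, rfl⟩; exact ⟨k, by simp [nsmul_eq_mul, mul_comm]⟩

/-- core predicate -/
def saP (n a x : ℕ) : Prop :=
  (2*x < n ∧ a ∣ x) ∨ (n < 2*x ∧ x < n ∧ ¬ a ∣ (n - x)) ∨ n < x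

lemma saP_add_sm {n a x y : ℕ} (h2 : ¬ a ∣ n)
    (hx : 2*x < n ∧ a ∣ x) (hy : n < 2*y ∧ y < n ∧ ¬ a ∣ (n - y)) :
    saP n a (x + y) := by
  obtain ⟨hx1, hx2⟩ := hx
  obtain ⟨hy1, hy2, hy3⟩ := hy
  rcases (by omega : x + y < n ∨ x + y = n ∨ n < x + y) with h | h | h
  · refine Or.inr (Or.inl ⟨by omega, h, ?_⟩)
    intro hc
    exact hy3 (by have e : n - y = (n - (x+y)) + x := by omega
                  rw [e]; exact dvd_add hc hx2)
  · exact absurd (by have e : n - y = x := by omega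
                     rw [e]; exact hx2) hy3
  · exact Or.inr (Or.inr h)

lemma saP_add {n a : ℕ} (h2 : ¬ a ∣ n) {x y : ℕ}
    (hx : saP n a x) (hy : saP n a y) : saP n a (x + y) := by
  rcases hx with hx | hx | hx
  · rcases hy with hy | hy | hy
    · -- small small
      have hd : a ∣ (x + y) := dvd_add hx.2 hy.2
      rcases (by omega : 2*(x+y) < n ∨ 2*(x+y) = n ∨ (n < 2*(x+y) ∧ x+y < n)
          ∨ x + y = n ∨ n < x + y) with h | h | ⟨h, h'⟩ | h | h
      · exact Or.inl ⟨h, hd⟩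
      · exact absurd (by have : n = 2*(x+y) := h.symm
                         rw [this]; exact hd.mul_left 2) h2
      · refine Or.inr (Or.inl ⟨h, h', ?_⟩)
        intro hc
        exact h2 (by have e : n = (x+y) + (n - (x+y)) := by omega
                     rw [e]; exact dvd_add hd hc)
      · exact absurd (h ▸ hd) h2
      · exact Or.inr (Or.inr h)
    · exact saP_add_sm h2 hx hy
    · exact Or.inr (Or.inr (by omega))
  · rcases hy with hy | hy | hy
    · exact add_comm x y ▸ saP_add_sm h2 hy hx
    · exact Or.inr (Or.inr (by omega))
    · exact Or.inr (Or.inr (by omega))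
  · exact Or.inr (Or.inr (by omega))

def Sa (n a : ℕ) (h1 : 2*a < n) (h2 : ¬ a ∣ n) : AddSubmonoid ℕ where
  carrier := {x | saP n a x}
  zero_mem' := Or.inl ⟨by omega, dvd_zero a⟩
  add_mem' := fun hx hy => saP_add h2 hx hy

lemma mem_Sa {n a x : ℕ} (h1 : 2*a < n) (h2 : ¬ a ∣ n) :
    x ∈ Sa n a h1 h2 ↔ saP n a x := Iff.rfl

lemma gapSet_Sa_subset {n a : ℕ} (h1 : 2*a < n) (h2 : ¬ a ∣ n) :
    gapSet (Sa n a h1 h2) ⊆ Set.Iic n := by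
  intro x hx
  simp only [Set.mem_Iic]
  by_contra h
  push_neg at h
  exact hx (Or.inr (Or.inr h))

lemma cofinite_Sa {n a : ℕ} (h1 : 2*a < n) (h2 : ¬ a ∣ n) :
    IsCofinite (Sa n a h1 h2) :=
  (Set.finite_Iic n).subset (gapSet_Sa_subset h1 h2)

lemma n_not_mem_Sa {n a : ℕ} (h1 : 2*a < n) (h2 : ¬ a ∣ n) :
    n ∉ Sa n a h1 h2 := by
  rintro (⟨h, _⟩ | ⟨h, h', _⟩ | h) <;> omega

lemma frob_Sa {n a : ℕ} (h1 : 2*a < n) (h2 : ¬ a ∣ n) :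
    frob (Sa n a h1 h2) = n :=
  IsGreatest.csSup_eq ⟨n_not_mem_Sa h1 h2, fun _ hx => gapSet_Sa_subset h1 h2 hx⟩

/-- general facts for a semigroup with finite gap set and frob = n -/
lemma n_not_mem_of_frob {T : AddSubmonoid ℕ} {n : ℕ} (hfin : (gapSet T).Finite)
    (h : frob T = n) (hn : 1 ≤ n) : n ∉ T := by
  by_cases hne : (gapSet T).Nonempty
  · have := Nat.sSup_mem hne hfin.bddAbove
    rw [show sSup (gapSet T) = n from h] at this
    exact this
  · exfalso
    rw [Set.not_nonempty_iff_eq_empty] at hne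
    rw [frob, hne, csSup_empty, Nat.bot_eq_zero] at h
    omega

lemma mem_of_gt_frob {T : AddSubmonoid ℕ} {n x : ℕ} (hfin : (gapSet T).Finite)
    (h : frob T = n) (hx : n < x) : x ∈ T := by
  by_contra hc
  have : x ≤ frob T := le_csSup hfin.bddAbove hc
  omega

/-- multiples of members are members -/
lemma dvd_mem {T : AddSubmonoid ℕ} {a x : ℕ} (ha : a ∈ T) (h : a ∣ x) : x ∈ T := by
  obtain ⟨k, rfl⟩ := h
  have := T.nsmul_mem ha k
  simpa [nsmul_eq_mul, mul_comm] using this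

lemma irred_Sa {n a : ℕ} (hn : 2 ≤ n) (h0 : 0 < a) (h1 : 2*a < n) (h2 : ¬ a ∣ n) :
    IsIrred (Sa n a h1 h2) := by
  refine ⟨cofinite_Sa h1 h2, ?_, ?_⟩
  · intro h
    exact n_not_mem_Sa h1 h2 (h ▸ AddSubmonoid.mem_top n)
  · intro T hle hfrob
    rw [frob_Sa h1 h2] at hfrob
    have hfinT : (gapSet T).Finite :=
      (cofinite_Sa h1 h2).subset (fun x hx => fun hc => hx (hle hc))
    have hnT : n ∉ T := n_not_mem_of_frob hfinT hfrob (by omega)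
    refine le_antisymm ?_ hle
    intro x hxT
    by_contra hxS
    -- cases on why x ∉ Sa
    have hx_le : x ≤ n := by
      by_contra h; exact hxS (Or.inr (Or.inr (by omega)))
    have hx_ne : x ≠ n := by rintro rfl; exact hnT hxT
    rcases (by omega : 2*x < n ∨ 2*x = n ∨ (n < 2*x ∧ x < n)) with h | h | ⟨h, h'⟩
    · -- small gap: x not multiple of a, then n - x ∈ Sa
      have hxd : ¬ a ∣ x := fun hd => hxS (Or.inl ⟨h, hd⟩)
      have hx0 : x ≠ 0 := by rintro rfl; exact hxd (dvd_zero a)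
      have : (n - x) ∈ Sa n a h1 h2 := by
        refine Or.inr (Or.inl ⟨by omega, by omega, ?_⟩)
        have e : n - (n - x) = x := by omega
        rw [e]; exact hxd
      have : (n - x) ∈ T := hle this
      have : n ∈ T := by
        have := T.add_mem hxT this
        rwa [show x + (n - x) = n by omega] at this
      exact hnT this
    · exact hnT (by have := T.add_mem hxT hxT
                    rwa [show x + x = n by omega] at this)
    · have hxd : a ∣ (n - x) := by
        by_contra hd; exact hxS (Or.inr (Or.inl ⟨h, h', hd⟩))
      have : (n - x) ∈ Sa n a h1 h2 := Or.inl ⟨by omega, hxd⟩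
      have : n ∈ T := by
        have := T.add_mem hxT (hle this)
        rwa [show x + (n - x) = n by omega] at this
      exact hnT this

lemma a_mem_Sa {n a : ℕ} (h1 : 2*a < n) (h2 : ¬ a ∣ n) : a ∈ Sa n a h1 h2 :=
  Or.inl ⟨h1, dvd_refl a⟩

lemma small_minGens_Sa {n a : ℕ} (h0 : 0 < a) (h1 : 2*a < n) (h2 : ¬ a ∣ n) :
    {s : ℕ | s ∈ minGens (Sa n a h1 h2) ∧ 2 * s < n} = {a} := by
  ext s
  simp only [Set.mem_setOf_eq, Set.mem_singleton_iff]
  constructor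
  · rintro ⟨⟨hsS, hs0, hsnd⟩, hss⟩
    -- s ∈ Sa, small ⇒ a ∣ s
    have hsd : a ∣ s := by
      rcases hsS with ⟨_, hd⟩ | ⟨h, _, _⟩ | h
      · exact hd
      · omega
      · omega
    obtain ⟨k, rfl⟩ := hsd
    have hk : 1 ≤ k := by
      rcases Nat.eq_zero_or_pos k with rfl | h
      · simp at hs0
      · exact h
    rcases Nat.lt_or_ge k 2 with hk2 | hk2
    · have : k = 1 := by omega
      simp [this]
    · exfalso
      obtain ⟨j, rfl⟩ : ∃ j, k = j + 2 := ⟨k - 2, by omega⟩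
      apply hsnd
      refine ⟨a, a_mem_Sa h1 h2, a * (j+1), ?_, by omega, ?_, by ring⟩
      · refine Or.inl ⟨?_, dvd_mul_right a (j+1)⟩
        have : a * (j+1) ≤ a * (j+2) := Nat.mul_le_mul_left a (by omega)
        omega
      · exact Nat.mul_ne_zero (by omega) (by omega)
  · rintro rfl
    refine ⟨⟨a_mem_Sa h1 h2, by omega, ?_⟩, by omega⟩
    rintro ⟨u, hu, v, hv, hu0, hv0, huv⟩
    -- u, v nonzero elements of Sa with u + v = a; but nonzero elements are ≥ a
    have hua : s ≤ u := by
      rcases hu with ⟨_, hd⟩ | ⟨h, _, _⟩ | h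
      · exact Nat.le_of_dvd (by omega) hd
      · omega
      · omega
    have hva : s ≤ v := by
      rcases hv with ⟨_, hd⟩ | ⟨h, _, _⟩ | h
      · exact Nat.le_of_dvd (by omega) hd
      · omega
      · omega
    omega

lemma mem_closure_minGens (T : AddSubmonoid ℕ) :
    ∀ x ∈ T, x ∈ AddSubmonoid.closure (minGens T) := by
  intro x
  induction x using Nat.strong_induction_on with
  | _ x ih =>
    intro hx
    rcases Nat.eq_zero_or_pos x with rfl | hx0
    · exact zero_mem _
    by_cases hmg : x ∈ minGens T
    · exact AddSubmonoid.subset_closure hmg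
    · have hdec : ∃ u ∈ T, ∃ v ∈ T, u ≠ 0 ∧ v ≠ 0 ∧ x = u + v := by
        by_contra hc
        exact hmg ⟨hx, by omega, hc⟩
      obtain ⟨u, hu, v, hv, hu0, hv0, rfl⟩ := hdec
      exact add_mem (ih u (by omega) hu) (ih v (by omega) hv)

lemma small_dvd {S : AddSubmonoid ℕ} {n a : ℕ}
    (h : ∀ s ∈ minGens S, 2*s < n → s = a) :
    ∀ x ∈ S, 2*x < n → a ∣ x := by
  intro x
  induction x using Nat.strong_induction_on with
  | _ x ih =>
    intro hx hxs
    rcases Nat.eq_zero_or_pos x with rfl | hx0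
    · exact dvd_zero a
    by_cases hmg : x ∈ minGens S
    · rw [h x hmg hxs]
    · have hdec : ∃ u ∈ S, ∃ v ∈ S, u ≠ 0 ∧ v ≠ 0 ∧ x = u + v := by
        by_contra hc
        exact hmg ⟨hx, by omega, hc⟩
      obtain ⟨u, hu, v, hv, hu0, hv0, rfl⟩ := hdec
      exact dvd_add (ih u (by omega) hu (by omega)) (ih v (by omega) hv (by omega))

lemma fill {S : AddSubmonoid ℕ} {n : ℕ} (hn : 1 ≤ n) (hirr : IsIrred S)
    (hf : frob S = n) {g : ℕ} (hg : g ∉ S) :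
    ∃ s ∈ S, ∃ k, 1 ≤ k ∧ s + k * g = n := by
  have hfin := hirr.1
  set T := S ⊔ AddSubmonoid.closure {g} with hT
  have hST : S ≤ T := le_sup_left
  have hnT : n ∈ T := by
    by_contra hnT
    have hfrobT : frob T = n := by
      apply IsGreatest.csSup_eq
      refine ⟨hnT, fun x hx => ?_⟩
      have : x ≤ frob S := le_csSup hfin.bddAbove (fun hc => hx (hST hc))
      omega
    have hTS := hirr.2.2 T hST (by rw [hfrobT, hf])
    have hgT : g ∈ T := (le_sup_right : AddSubmonoid.closure {g} ≤ T) (AddSubmonoid.subset_closure rfl)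
    exact hg (hTS ▸ hgT)
  rw [hT, AddSubmonoid.mem_sup] at hnT
  obtain ⟨s, hs, t, ht, hst⟩ := hnT
  rw [mem_closure_singleton_iff_dvd] at ht
  obtain ⟨k, rfl⟩ := ht
  have hnS : n ∉ S := n_not_mem_of_frob hfin hf hn
  refine ⟨s, hs, k, ?_, by rw [mul_comm]; omega⟩
  rcases Nat.eq_zero_or_pos k with rfl | h
  · exfalso
    apply hnS
    rw [show n = s by omega] 
    exact hs
  · exact h

lemma classify {S : AddSubmonoid ℕ} {n a : ℕ} (hn : 2 ≤ n)
    (hirr : IsIrred S) (hf : frob S = n)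
    (hsm : {s : ℕ | s ∈ minGens S ∧ 2 * s < n} = {a}) :
    ∃ (h0 : 0 < a) (h1 : 2*a < n) (h2 : ¬ a ∣ n), S = Sa n a h1 h2 := by
  have hfin := hirr.1
  have haMG : a ∈ minGens S ∧ 2*a < n := by
    have h : a ∈ ({a} : Set ℕ) := rfl
    rw [← hsm] at h
    exact h
  have haS : a ∈ S := haMG.1.1
  have h0 : 0 < a := Nat.pos_of_ne_zero haMG.1.2.1
  have h1 : 2*a < n := haMG.2
  have hnS : n ∉ S := n_not_mem_of_frob hfin hf (by omega)
  have h2 : ¬ a ∣ n := fun hd => hnS (dvd_mem haS hd)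
  have hdvd : ∀ x ∈ S, 2*x < n → a ∣ x := by
    apply small_dvd
    intro s hs hss
    have h : s ∈ ({a} : Set ℕ) := by rw [← hsm]; exact ⟨hs, hss⟩
    exact h
  refine ⟨h0, h1, h2, ?_⟩
  ext x
  rw [mem_Sa]
  constructor
  · intro hx
    rcases (by omega : 2*x < n ∨ 2*x = n ∨ (n < 2*x ∧ x < n) ∨ x = n ∨ n < x)
      with h | h | ⟨h, h'⟩ | h | h
    · exact Or.inl ⟨h, hdvd x hx h⟩
    · exfalso
      apply hnS
      have := S.add_mem hx hx
      rwa [show x + x = n by omega] at this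
    · refine Or.inr (Or.inl ⟨h, h', ?_⟩)
      intro hc
      apply hnS
      have := S.add_mem hx (dvd_mem haS hc)
      rwa [show x + (n - x) = n by omega] at this
    · exact absurd (h ▸ hx) hnS
    · exact Or.inr (Or.inr h)
  · rintro (⟨h, hd⟩ | ⟨h, h', hd⟩ | h)
    · exact dvd_mem haS hd
    · by_contra hx
      obtain ⟨s, hs, k, hk, hsk⟩ := fill (by omega) hirr hf hx
      have hkx : k * x ≤ n := by omega
      have hk1 : k = 1 := by
        by_contra hk2
        have : 2 * x ≤ k * x := Nat.mul_le_mul_right x (by omega)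
        omega
      subst hk1
      apply hd
      have : a ∣ s := hdvd s hs (by omega)
      rwa [show n - x = s by omega]
    · exact mem_of_gt_frob hfin hf h

lemma minGens_closure_singleton {a : ℕ} (h0 : 0 < a) :
    minGens (AddSubmonoid.closure ({a} : Set ℕ)) = {a} := by
  ext s
  simp only [Set.mem_singleton_iff]
  constructor
  · rintro ⟨hs, hs0, hnd⟩
    rw [mem_closure_singleton_iff_dvd] at hs
    obtain ⟨k, rfl⟩ := hs
    have hk : 1 ≤ k := by
      rcases Nat.eq_zero_or_pos k with rfl | h
      · simp at hs0
      · exact h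
    rcases Nat.lt_or_ge k 2 with hk2 | hk2
    · have hk1 : k = 1 := by omega
      simp [hk1]
    · exfalso
      apply hnd
      obtain ⟨j, rfl⟩ : ∃ j, k = j + 2 := ⟨k - 2, by omega⟩
      exact ⟨a, mem_closure_singleton_iff_dvd.mpr dvd_rfl, a * (j+1),
        mem_closure_singleton_iff_dvd.mpr (dvd_mul_right _ _), by omega,
        Nat.mul_ne_zero (by omega) (by omega), by ring⟩
  · rintro rfl
    refine ⟨mem_closure_singleton_iff_dvd.mpr dvd_rfl, by omega, ?_⟩
    rintro ⟨u, hu, v, hv, hu0, hv0, huv⟩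
    rw [mem_closure_singleton_iff_dvd] at hu hv
    have := Nat.le_of_dvd (by omega) hu
    have := Nat.le_of_dvd (by omega) hv
    omega

lemma eq_closure_of_minGens {T : AddSubmonoid ℕ} {b : ℕ} (h : minGens T = {b}) :
    T = AddSubmonoid.closure ({b} : Set ℕ) := by
  apply le_antisymm
  · intro x hx
    have := mem_closure_minGens T x hx
    rwa [h] at this
  · rw [AddSubmonoid.closure_le]
    intro s hs
    rw [Set.mem_singleton_iff] at hs
    subst hs
    have : s ∈ minGens T := h ▸ rfl
    exact this.1

noncomputable def SaM (n a : ℕ) : AddSubmonoid ℕ :=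
  if h : 2*a < n ∧ ¬ a ∣ n then Sa n a h.1 h.2 else ⊥

lemma SaM_eq {n a : ℕ} (h1 : 2*a < n) (h2 : ¬ a ∣ n) :
    SaM n a = Sa n a h1 h2 := dif_pos ⟨h1, h2⟩

theorem statement7' (n : ℕ) (hn : 2 ≤ n) :
    {S : AddSubmonoid ℕ | IsIrred S ∧ frob S = n ∧
        {a : ℕ | a ∈ minGens S ∧ 2 * a < n}.ncard = 1}.ncard
      = {a : ℕ | 0 < a ∧ 2 * a < n ∧ ¬ a ∣ n}.ncard ∧
    {T : AddSubmonoid ℕ | n ∉ T ∧ embDim T = 1 ∧ ∀ a ∈ minGens T, 2 * a < n}.ncard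
      = {a : ℕ | 0 < a ∧ 2 * a < n ∧ ¬ a ∣ n}.ncard := by
  set A : Set ℕ := {a : ℕ | 0 < a ∧ 2 * a < n ∧ ¬ a ∣ n} with hA
  constructor
  · have himg : {S : AddSubmonoid ℕ | IsIrred S ∧ frob S = n ∧
        {a : ℕ | a ∈ minGens S ∧ 2 * a < n}.ncard = 1} = SaM n '' A := by
      ext S
      simp only [Set.mem_setOf_eq, Set.mem_image]
      constructor
      · rintro ⟨hirr, hf, hcard⟩
        obtain ⟨a, hsm⟩ := Set.ncard_eq_one.mp hcard
        obtain ⟨h0, h1, h2, rfl⟩ := classify hn hirr hf hsm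
        exact ⟨a, ⟨h0, h1, h2⟩, SaM_eq h1 h2⟩
      · rintro ⟨a, ⟨h0, h1, h2⟩, rfl⟩
        rw [SaM_eq h1 h2]
        refine ⟨irred_Sa hn h0 h1 h2, frob_Sa h1 h2, ?_⟩
        rw [small_minGens_Sa h0 h1 h2, Set.ncard_singleton]
    rw [himg]
    apply Set.ncard_image_of_injOn
    rintro a1 ⟨ha1, hb1, hc1⟩ a2 ⟨ha2, hb2, hc2⟩ heq
    rw [SaM_eq hb1 hc1, SaM_eq hb2 hc2] at heq
    have m1 : a1 ∈ Sa n a2 hb2 hc2 := heq ▸ a_mem_Sa hb1 hc1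
    have m2 : a2 ∈ Sa n a1 hb1 hc1 := heq ▸ a_mem_Sa hb2 hc2
    have d1 : a2 ∣ a1 := by
      rcases m1 with ⟨_, hd⟩ | ⟨h, _, _⟩ | h
      · exact hd
      · omega
      · omega
    have d2 : a1 ∣ a2 := by
      rcases m2 with ⟨_, hd⟩ | ⟨h, _, _⟩ | h
      · exact hd
      · omega
      · omega
    exact Nat.dvd_antisymm d2 d1
  · have himg : {T : AddSubmonoid ℕ | n ∉ T ∧ embDim T = 1 ∧
        ∀ a ∈ minGens T, 2 * a < n}
        = (fun a => AddSubmonoid.closure ({a} : Set ℕ)) '' A := by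
      ext T
      simp only [Set.mem_setOf_eq, Set.mem_image]
      constructor
      · rintro ⟨hnT, hed, hsmall⟩
        obtain ⟨b, hb⟩ := Set.ncard_eq_one.mp hed
        have hbMG : b ∈ minGens T := hb ▸ rfl
        refine ⟨b, ⟨Nat.pos_of_ne_zero hbMG.2.1, hsmall b hbMG, ?_⟩,
          (eq_closure_of_minGens hb).symm⟩
        intro hd
        exact hnT (dvd_mem hbMG.1 hd)
      · rintro ⟨a, ⟨h0, h1, h2⟩, rfl⟩
        refine ⟨fun hc => h2 (mem_closure_singleton_iff_dvd.mp hc), ?_, ?_⟩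
        · rw [embDim, minGens_closure_singleton h0, Set.ncard_singleton]
        · intro s hs
          rw [minGens_closure_singleton h0, Set.mem_singleton_iff] at hs
          omega
    rw [himg]
    apply Set.ncard_image_of_injOn
    rintro a1 ⟨ha1, hb1, hc1⟩ a2 ⟨ha2, hb2, hc2⟩ heq
    simp only at heq
    have m1 : a1 ∈ AddSubmonoid.closure ({a2} : Set ℕ) := by
      rw [← heq]; exact mem_closure_singleton_iff_dvd.mpr dvd_rfl
    have m2 : a2 ∈ AddSubmonoid.closure ({a1} : Set ℕ) := by
      rw [heq]; exact mem_closure_singleton_iff_dvd.mpr dvd_rfl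
    exact Nat.dvd_antisymm (mem_closure_singleton_iff_dvd.mp m2)
      (mem_closure_singleton_iff_dvd.mp m1)

theorem statement7 (n : ℕ) (hn : 2 ≤ n) :
    {S : AddSubmonoid ℕ | IsIrred S ∧ frob S = n ∧
        {a : ℕ | a ∈ minGens S ∧ 2 * a < n}.ncard = 1}.ncard
      = {a : ℕ | 0 < a ∧ 2 * a < n ∧ ¬ a ∣ n}.ncard ∧
    hvec n 1 = {a : ℕ | 0 < a ∧ 2 * a < n ∧ ¬ a ∣ n}.ncard := by
  have h := statement7' n hn
  exact ⟨h.1, by rw [hvec]; exact h.2⟩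
end

section
/- For all integers n ≥ 1, i ≥ 1, and N ≥ 2, we have Σ_{j=2}^{N} C(⌊(n−1)/j⌋ − ⌊n/(j+1)⌋, i) ≤ h_{n,i} ≤ C(⌈n/2⌉ − 2i, i), where C(m, i) denotes the binomial coefficient, taken to be 0 when m < i (and the top entry ⌈n/2⌉ − 2i is interpreted as 0 when negative). -/
open Filter Topology
open scoped Classical BigOperators

-- auxiliary lemmas
lemma aux_closure_minGens (T : AddSubmonoid ℕ) :
    AddSubmonoid.closure (minGens T) = T := by
  apply le_antisymm
  · rw [AddSubmonoid.closure_le]; intro x hx; exact hx.1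
  · intro t ht
    induction t using Nat.strong_induction_on with
    | _ t IH =>
      rcases eq_or_ne t 0 with rfl | h0
      · exact zero_mem _
      by_cases hmin : t ∈ minGens T
      · exact AddSubmonoid.subset_closure hmin
      · simp only [minGens, Set.mem_setOf_eq] at hmin
        push_neg at hmin
        obtain ⟨a, ha, b, hb, ha0, hb0, rfl⟩ := hmin ht h0
        exact add_mem (IH a (by omega) ha) (IH b (by omega) hb)

lemma aux_lb {A : Set ℕ} {n j : ℕ} (hA : ∀ a ∈ A, n < (j+1) * a)
    {x : ℕ} (hx : x ∈ AddSubmonoid.closure A) (hx0 : x ≠ 0) : n < (j+1) * x := by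
  have H : x = 0 ∨ n < (j+1) * x := by
    refine AddSubmonoid.closure_induction (motive := fun x _ => x = 0 ∨ n < (j+1) * x)
      ?_ (Or.inl rfl) ?_ hx
    · intro a ha; exact Or.inr (hA a ha)
    · intro a b _ _ iha ihb
      rcases iha with rfl | iha
      · simpa using ihb
      · right
        have : (j+1) * a ≤ (j+1) * (a + b) := Nat.mul_le_mul_left _ (by omega)
        omega
  tauto

lemma aux_not_mem {A : Set ℕ} {n j : ℕ} (hj : 2 ≤ j) (hn : 1 ≤ n)
    (hA : ∀ a ∈ A, n < (j+1) * a ∧ j * a < n) :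
    n ∉ AddSubmonoid.closure A := by
  intro hmem
  have key : ∃ k, j * n ≤ k * (n-1) ∧ k * (n+1) ≤ (j+1) * n := by
    refine AddSubmonoid.closure_induction
      (motive := fun x _ => ∃ k, j * x ≤ k * (n-1) ∧ k * (n+1) ≤ (j+1) * x)
      ?_ ⟨0, by simp⟩ ?_ hmem
    · intro a ha
      refine ⟨1, ?_, ?_⟩
      · rw [one_mul]; exact Nat.le_sub_one_of_lt (hA a ha).2
      · rw [one_mul]; exact (hA a ha).1
    · rintro a b _ _ ⟨k1, h1, h2⟩ ⟨k2, h3, h4⟩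
      refine ⟨k1 + k2, ?_, ?_⟩
      · have := Nat.add_le_add h1 h3; nlinarith
      · have := Nat.add_le_add h2 h4; nlinarith
  obtain ⟨k, h1, h2⟩ := key
  have hk : j < k := by
    by_contra h
    push_neg at h
    have h3 : k * (n-1) ≤ j * (n-1) := Nat.mul_le_mul_right _ h
    have h4 : j * n ≤ j * (n-1) := le_trans h1 h3
    have h5 : n ≤ n - 1 := Nat.le_of_mul_le_mul_left h4 (by omega)
    omega
  have h6 : (j+1) * (n+1) ≤ k * (n+1) := Nat.mul_le_mul_right _ (by omega)
  have h7 : n + 1 ≤ n := Nat.le_of_mul_le_mul_left (le_trans h6 h2) (by omega)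
  omega

lemma aux_minGens_closure {A : Set ℕ} {n j : ℕ} (hj : 2 ≤ j) (hn : 1 ≤ n)
    (hA : ∀ a ∈ A, n < (j+1) * a ∧ j * a < n) :
    minGens (AddSubmonoid.closure A) = A := by
  have hne : ∀ a ∈ A, a ≠ 0 := by
    intro a ha h0
    have := (hA a ha).1
    rw [h0, mul_zero] at this
    omega
  ext s
  constructor
  · rintro ⟨hs, hs0, hdec⟩
    have H : s = 0 ∨ s ∈ A ∨ ∃ b ∈ AddSubmonoid.closure A, ∃ c ∈ AddSubmonoid.closure A,
        b ≠ 0 ∧ c ≠ 0 ∧ s = b + c := by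
      refine AddSubmonoid.closure_induction
        (motive := fun x _ => x = 0 ∨ x ∈ A ∨ ∃ b ∈ AddSubmonoid.closure A,
          ∃ c ∈ AddSubmonoid.closure A, b ≠ 0 ∧ c ≠ 0 ∧ x = b + c)
        ?_ (Or.inl rfl) ?_ hs
      · intro a ha; exact Or.inr (Or.inl ha)
      · intro a b hac hbc iha ihb
        rcases iha with rfl | iha
        · simpa using ihb
        rcases ihb with rfl | ihb
        · simpa using Or.inr iha
        · have ha0 : a ≠ 0 := by
            rcases iha with h | ⟨b', _, c', _, hb0, hc0, rfl⟩
            · exact hne a h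
            · omega
          have hb0 : b ≠ 0 := by
            rcases ihb with h | ⟨b', _, c', _, hb0', hc0, rfl⟩
            · exact hne b h
            · omega
          exact Or.inr (Or.inr ⟨a, hac, b, hbc, ha0, hb0, rfl⟩)
    rcases H with rfl | h | h
    · exact absurd rfl hs0
    · exact h
    · exact absurd h hdec
  · intro ha
    have h1 := (hA s ha).1
    have h2 := (hA s ha).2
    refine ⟨AddSubmonoid.subset_closure ha, by rintro rfl; rw [mul_zero] at h1; omega, ?_⟩
    rintro ⟨b, hb, c, hc, hb0, hc0, rfl⟩
    have Hb : n < (j+1) * b := aux_lb (fun a h => (hA a h).1) hb hb0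
    have Hc : n < (j+1) * c := aux_lb (fun a h => (hA a h).1) hc hc0
    have e1 : (j+1) * (b + c) = (j+1) * b + (j+1) * c := by ring
    have e2 : (j+1) * (b + c) = j * (b + c) + (b + c) := by ring
    have e3 : b + c ≤ j * (b + c) := Nat.le_mul_of_pos_left _ (by omega)
    omega

lemma aux_hSet_finite (n i : ℕ) :
    {T : AddSubmonoid ℕ | n ∉ T ∧ embDim T = i ∧ ∀ a ∈ minGens T, 2 * a < n}.Finite := by
  classical
  apply Set.Finite.subset (Set.Finite.image
    (fun B : Finset ℕ => AddSubmonoid.closure (B : Set ℕ))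
    ((Finset.Icc 1 n).powerset : Finset (Finset ℕ)).finite_toSet)
  intro T hT
  have hsub : minGens T ⊆ ↑(Finset.Icc 1 n) := by
    intro a ha
    have h1 := hT.2.2 a ha
    have h2 := ha.2.1
    simp only [Finset.coe_Icc, Set.mem_Icc]
    omega
  have hfin : (minGens T).Finite := Set.Finite.subset (Finset.finite_toSet _) hsub
  refine ⟨hfin.toFinset, ?_, ?_⟩
  · simp only [Finset.mem_coe, Finset.mem_powerset]
    intro x hx
    exact hsub (hfin.mem_toFinset.mp hx)
  · show AddSubmonoid.closure ↑hfin.toFinset = T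
    rw [Set.Finite.coe_toFinset, aux_closure_minGens]

lemma aux_two_i_le (n i : ℕ) (hn : 1 ≤ n) (hi : 1 ≤ i) (T : AddSubmonoid ℕ)
    (hTn : n ∉ T) (hTe : embDim T = i) (hTg : ∀ a ∈ minGens T, 2 * a < n) :
    ∀ a ∈ minGens T, 2 * i ≤ a := by
  classical
  have hfin : (minGens T).Finite := by
    apply Set.Finite.subset (Set.finite_Icc 1 n)
    intro a ha
    have h1 := hTg a ha
    have h2 := ha.2.1
    simp only [Set.mem_Icc]
    omega
  set B := hfin.toFinset with hB
  have hBcard : B.card = i := by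
    rw [← hTe, embDim, Set.ncard_eq_toFinset_card _ hfin]
  have hBne : B.Nonempty := by rw [← Finset.card_pos, hBcard]; omega
  set m := B.min' hBne with hm
  have hmB : m ∈ minGens T := hfin.mem_toFinset.mp (B.min'_mem hBne)
  have hdist : ∀ a ∈ minGens T, ∀ b ∈ minGens T, a % m = b % m → a = b := by
    have key : ∀ a ∈ minGens T, ∀ b ∈ minGens T, a < b → a % m ≠ b % m := by
      intro a ha b hb hab heq
      have hdvd : m ∣ b - a := (Nat.modEq_iff_dvd' (le_of_lt hab)).mp heq
      obtain ⟨q, hq⟩ := hdvd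
      have hmq0 : m * q ≠ 0 := by rw [← hq]; omega
      have hmq : m * q ∈ T := by
        have := AddSubmonoid.nsmul_mem T hmB.1 q
        simpa [smul_eq_mul, mul_comm] using this
      have hba : b = a + m * q := by rw [← hq]; omega
      exact hb.2.2 ⟨a, ha.1, m * q, hmq, ha.2.1, hmq0, hba⟩
    intro a ha b hb heq
    rcases lt_trichotomy a b with h | h | h
    · exact absurd heq (key a ha b hb h)
    · exact h
    · exact absurd heq.symm (key b hb a ha h)
  suffices h2i : 2 * i ≤ m by
    intro a ha
    have : m ≤ a := B.min'_le a (hfin.mem_toFinset.mpr ha)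
    omega
  by_contra hlt
  push_neg at hlt
  have hm1 : m ≠ 0 := hmB.2.1
  haveI : NeZero m := ⟨hm1⟩
  set f : ℕ → ZMod m := fun a => (a : ZMod m) with hf
  have hinj : Set.InjOn f ↑B := by
    intro a ha b hb h
    have hmodeq : a ≡ b [MOD m] := (ZMod.natCast_eq_natCast_iff _ _ _).mp h
    exact hdist a (hfin.mem_toFinset.mp ha) b (hfin.mem_toFinset.mp hb) hmodeq
  set S := B.image f with hSdef
  have hS : S.card = i := by rw [hSdef, Finset.card_image_of_injOn hinj, hBcard]
  set S' := S.image (fun x => (n : ZMod m) - x) with hS'def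
  have hS'card : S'.card = i := by
    rw [hS'def, Finset.card_image_of_injective _ sub_right_injective, hS]
  have hunion : (S ∪ S').card ≤ m := by
    calc (S ∪ S').card ≤ Fintype.card (ZMod m) := Finset.card_le_univ _
    _ = m := ZMod.card m
  have hint : 1 ≤ (S ∩ S').card := by
    have := Finset.card_union_add_card_inter S S'
    omega
  obtain ⟨z, hz⟩ := Finset.card_pos.mp hint
  obtain ⟨b0, hb0B, hb0⟩ := Finset.mem_image.mp (Finset.mem_inter.mp hz).1
  obtain ⟨x, hxS, hx⟩ := Finset.mem_image.mp (Finset.mem_inter.mp hz).2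
  obtain ⟨a0, ha0B, ha0⟩ := Finset.mem_image.mp hxS
  have hcast : ((a0 + b0 : ℕ) : ZMod m) = (n : ZMod m) := by
    push_cast
    have e1 : (a0 : ZMod m) = x := ha0
    have e2 : (b0 : ZMod m) = z := hb0
    have e3 : (n : ZMod m) - x = z := hx
    rw [e1, e2, ← e3]
    ring
  have hmodeq : (a0 + b0) ≡ n [MOD m] := (ZMod.natCast_eq_natCast_iff _ _ _).mp hcast
  have ha0g : a0 ∈ minGens T := hfin.mem_toFinset.mp ha0B
  have hb0g : b0 ∈ minGens T := hfin.mem_toFinset.mp hb0B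
  have hsn : a0 + b0 ≤ n := by
    have := hTg a0 ha0g
    have := hTg b0 hb0g
    omega
  obtain ⟨q, hq⟩ := (Nat.modEq_iff_dvd' hsn).mp hmodeq
  have hmqT : m * q ∈ T := by
    have := AddSubmonoid.nsmul_mem T hmB.1 q
    simpa [smul_eq_mul, mul_comm] using this
  have hnT : n ∈ T := by
    have he : n = (a0 + b0) + m * q := by rw [← hq]; omega
    rw [he]
    exact add_mem (add_mem ha0g.1 hb0g.1) hmqT
  exact hTn hnT

lemma aux_upper (n i : ℕ) (hn : 1 ≤ n) (hi : 1 ≤ i) :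
    hvec n i ≤ Nat.choose ((n + 1) / 2 - 2 * i) i := by
  classical
  set K := (n+1)/2 - 1 with hK
  have target : ((Finset.Icc (2*i) K).powersetCard i).card = ((n+1)/2 - 2*i).choose i := by
    rw [Finset.card_powersetCard, Nat.card_Icc]
    congr 1
    omega
  rw [hvec]
  set t : Set (Set ℕ) :=
    (fun B : Finset ℕ => (B : Set ℕ)) '' ↑((Finset.Icc (2*i) K).powersetCard i) with ht
  have htfin : t.Finite := Set.Finite.image _ (Finset.finite_toSet _)
  have h1 : {T : AddSubmonoid ℕ | n ∉ T ∧ embDim T = i ∧ ∀ a ∈ minGens T, 2 * a < n}.ncard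
      ≤ t.ncard := by
    apply Set.ncard_le_ncard_of_injOn (fun T => minGens T)
    · intro T hT
      obtain ⟨hTn, hTe, hTg⟩ := hT
      have hfin : (minGens T).Finite := by
        apply Set.Finite.subset (Set.finite_Icc 1 n)
        intro a ha
        have h1 := hTg a ha
        have h2 := ha.2.1
        simp only [Set.mem_Icc]
        omega
      refine ⟨hfin.toFinset, ?_, hfin.coe_toFinset⟩
      simp only [Finset.mem_coe, Finset.mem_powersetCard]
      constructor
      · intro x hx
        have hx' : x ∈ minGens T := hfin.mem_toFinset.mp hx
        have h2i := aux_two_i_le n i hn hi T hTn hTe hTg x hx'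
        have h2 := hTg x hx'
        simp only [Finset.mem_Icc]
        omega
      · rw [← hTe, embDim, Set.ncard_eq_toFinset_card _ hfin]
    · intro T1 hT1 T2 hT2 he
      rw [← aux_closure_minGens T1, ← aux_closure_minGens T2]
      simp only at he
      rw [he]
  have h2 : t.ncard = ((n+1)/2 - 2*i).choose i := by
    rw [ht, Set.ncard_image_of_injective _ Finset.coe_injective,
      Set.ncard_coe_finset, target]
  omega

lemma aux_lower (n i N : ℕ) (hn : 1 ≤ n) (hi : 1 ≤ i) (hN : 2 ≤ N) :
    (∑ j ∈ Finset.Icc 2 N, Nat.choose ((n - 1) / j - n / (j + 1)) i) ≤ hvec n i := by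
  classical
  set I : ℕ → Finset ℕ := fun j => Finset.Ioc (n/(j+1)) ((n-1)/j) with hI
  have hIprop : ∀ j, 2 ≤ j → ∀ a ∈ I j, n < (j+1) * a ∧ j * a < n := by
    intro j hj a ha
    rw [hI] at ha
    simp only [Finset.mem_Ioc] at ha
    constructor
    · have h1 := (Nat.div_lt_iff_lt_mul (k := j+1) (by omega)).mp ha.1
      rwa [mul_comm] at h1
    · have h1 := (Nat.le_div_iff_mul_le (k := j) (by omega)).mp ha.2
      rw [mul_comm] at h1
      exact Nat.lt_of_le_of_lt h1 (by omega)
  set cl : Finset ℕ → AddSubmonoid ℕ := fun A => AddSubmonoid.closure (A : Set ℕ) with hcl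
  set F : ℕ → Finset (AddSubmonoid ℕ) :=
    fun j => (Finset.powersetCard i (I j)).image cl with hF
  have hprop' : ∀ j, 2 ≤ j → ∀ A ∈ Finset.powersetCard i (I j),
      ∀ a ∈ (A : Set ℕ), n < (j+1) * a ∧ j * a < n := by
    intro j hj A hA a ha
    exact hIprop j hj a ((Finset.mem_powersetCard.mp hA).1 (Finset.mem_coe.mp ha))
  have hmg : ∀ j, 2 ≤ j → ∀ A ∈ Finset.powersetCard i (I j),
      minGens (cl A) = ↑A := by
    intro j hj A hA
    exact aux_minGens_closure hj hn (hprop' j hj A hA)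
  have hinj : ∀ j, 2 ≤ j → Set.InjOn cl ↑(Finset.powersetCard i (I j)) := by
    intro j hj A hA B hB he
    apply Finset.coe_injective
    rw [← hmg j hj A (Finset.mem_coe.mp hA), ← hmg j hj B (Finset.mem_coe.mp hB), he]
  have hcardF : ∀ j ∈ Finset.Icc 2 N, (F j).card = ((n-1)/j - n/(j+1)).choose i := by
    intro j hj
    simp only [Finset.mem_Icc] at hj
    rw [hF]
    simp only
    rw [Finset.card_image_of_injOn (hinj j hj.1), Finset.card_powersetCard, hI]
    simp only [Nat.card_Ioc]
  have hdisjkey : ∀ j j', 2 ≤ j → j < j' → ∀ a, a ∈ I j → a ∈ I j' → False := by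
    intro j j' hj hjj a haj haj'
    rw [hI] at haj haj'
    simp only [Finset.mem_Ioc] at haj haj'
    have t1 : (n-1)/j' ≤ (n-1)/(j+1) := Nat.div_le_div_left (by omega) (by omega)
    have t2 : (n-1)/(j+1) ≤ n/(j+1) := Nat.div_le_div_right (by omega)
    exact lt_irrefl a (lt_of_le_of_lt (le_trans (le_trans haj'.2 t1) t2) haj.1)
  have hdisj : ∀ j1 ∈ Finset.Icc 2 N, ∀ j2 ∈ Finset.Icc 2 N, j1 ≠ j2 →
      Disjoint (F j1) (F j2) := by
    intro j1 h1 j2 h2 hne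
    simp only [Finset.mem_Icc] at h1 h2
    rw [Finset.disjoint_left]
    intro X hX1 hX2
    obtain ⟨A1, hA1, hXe1⟩ := Finset.mem_image.mp hX1
    obtain ⟨A2, hA2, hXe2⟩ := Finset.mem_image.mp hX2
    have he : cl A1 = cl A2 := by rw [hXe1, hXe2]
    have hAe : (A1 : Set ℕ) = (A2 : Set ℕ) := by
      rw [← hmg j1 h1.1 A1 hA1, ← hmg j2 h2.1 A2 hA2, he]
    have hA1ne : A1.Nonempty := by
      rw [← Finset.card_pos, (Finset.mem_powersetCard.mp hA1).2]
      omega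
    obtain ⟨a, ha⟩ := hA1ne
    have ha1 : a ∈ I j1 := (Finset.mem_powersetCard.mp hA1).1 ha
    have ha2 : a ∈ I j2 := by
      apply (Finset.mem_powersetCard.mp hA2).1
      have : a ∈ (A2 : Set ℕ) := hAe ▸ (Finset.mem_coe.mpr ha)
      exact Finset.mem_coe.mp this
    rcases Nat.lt_or_ge j1 j2 with h | h
    · exact hdisjkey j1 j2 h1.1 h a ha1 ha2
    · have : j2 < j1 := by omega
      exact hdisjkey j2 j1 h2.1 this a ha2 ha1
  set G := (Finset.Icc 2 N).biUnion F with hG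
  have hGsub : ↑G ⊆ {T : AddSubmonoid ℕ | n ∉ T ∧ embDim T = i ∧
      ∀ a ∈ minGens T, 2 * a < n} := by
    intro X hX
    rw [hG] at hX
    obtain ⟨j, hj, hXj⟩ := Finset.mem_biUnion.mp (Finset.mem_coe.mp hX)
    simp only [Finset.mem_Icc] at hj
    obtain ⟨A, hA, rfl⟩ := Finset.mem_image.mp hXj
    have hprop := hprop' j hj.1 A hA
    refine ⟨aux_not_mem hj.1 hn hprop, ?_, ?_⟩
    · rw [embDim, hmg j hj.1 A hA, Set.ncard_coe_finset,
        (Finset.mem_powersetCard.mp hA).2]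
    · intro a ha
      rw [hmg j hj.1 A hA] at ha
      have h1 := (hprop a ha).2
      have h2 : 2 * a ≤ j * a := Nat.mul_le_mul_right a hj.1
      omega
  calc (∑ j ∈ Finset.Icc 2 N, Nat.choose ((n - 1) / j - n / (j + 1)) i)
      = ∑ j ∈ Finset.Icc 2 N, (F j).card := (Finset.sum_congr rfl hcardF).symm
    _ = G.card := (Finset.card_biUnion hdisj).symm
    _ = (↑G : Set (AddSubmonoid ℕ)).ncard := (Set.ncard_coe_finset G).symm
    _ ≤ hvec n i := Set.ncard_le_ncard hGsub (aux_hSet_finite n i)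

theorem statement9 (n i N : ℕ) (hn : 1 ≤ n) (hi : 1 ≤ i) (hN : 2 ≤ N) :
    (∑ j ∈ Finset.Icc 2 N, Nat.choose ((n - 1) / j - n / (j + 1)) i) ≤ hvec n i ∧
    hvec n i ≤ Nat.choose ((n + 1) / 2 - 2 * i) i :=
  ⟨aux_lower n i N hn hi hN, aux_upper n i hn hi⟩
end
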